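/- arXiv:1804.02951 — 2 statements merged into one kernel-verified Lean document; each statement's English description precedes it below -/
import Mathlib

section
/- Let Λ be a σ-compact metric space, X a separable Fréchet space, and (T(λ))_{λ∈Λ} a continuous family of continuous linear operators on X (meaning λ ↦ T(λ)(x) is continuous for each x). Suppose that for every non-empty open subset V of X and every compact subset K of Λ there exists δ > 0 such that for every non-empty open subset U of X and every M ∈ ℕ there exists x ∈ U with: for all λ ∈ K there exists n ≥ M with #{0 ≤ m ≤ n : T(λ)^m(x) ∈ V}/(n+1) > δ. Then the set of vectors x that are upper frequently hypercyclic for every T(λ), λ ∈ Λ, is residual in X. -/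
open Filter Finset
set_option maxHeartbeats 2000000
open scoped Classical

/-- Proportion of times `m ≤ n` at which the orbit of `x` under `S` lies in `V`. -/
noncomputable def visitProp {X : Type*} (S : X → X) (x : X) (V : Set X) (n : ℕ) : ℝ :=
  (((Finset.range (n + 1)).filter (fun m => S^[m] x ∈ V)).card : ℝ) / (n + 1)

/-- `x` is upper frequently hypercyclic for `S`. -/
def IsUFHC {X : Type*} [TopologicalSpace X] (S : X → X) (x : X) : Prop :=
  ∀ V : Set X, IsOpen V → V.Nonempty →
    0 < Filter.atTop.limsup (fun n : ℕ => visitProp S x V n)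

lemma visitProp_le_one {X : Type*} (S : X → X) (x : X) (V : Set X) (n : ℕ) :
    visitProp S x V n ≤ 1 := by
  rw [visitProp, div_le_one (by positivity)]
  calc (((Finset.range (n + 1)).filter (fun m => S^[m] x ∈ V)).card : ℝ)
      ≤ ((Finset.range (n + 1)).card : ℝ) := by
        exact_mod_cast Finset.card_filter_le _ _
    _ = n + 1 := by simp

lemma visitProp_mono {X : Type*} (S : X → X) (x : X) {V W : Set X} (hVW : V ⊆ W) (n : ℕ) :
    visitProp S x V n ≤ visitProp S x W n := by
  rw [visitProp, visitProp]
  refine (div_le_div_iff_of_pos_right (by positivity)).mpr ?_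
  exact Nat.cast_le.mpr (Finset.card_le_card
    (Finset.monotone_filter_right _ (fun m _ hm => hVW hm)))

/-- Joint continuity of the iterates on a compact parameter set, via Banach–Steinhaus. -/
lemma jointCont {Λ : Type*} [TopologicalSpace Λ]
    {X : Type*} [AddCommGroup X] [Module ℝ X] [UniformSpace X] [IsUniformAddGroup X]
    [ContinuousSMul ℝ X] [LocallyConvexSpace ℝ X] [BaireSpace X]
    (T : Λ → X →L[ℝ] X) (hT : ∀ x : X, Continuous fun lam => T lam x)
    {K : Set Λ} (hK : IsCompact K) (m : ℕ) :
    Continuous fun p : K × X => (T p.1.1)^[m] p.2 := by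
  have hq : WithSeminorms (gaugeSeminormFamily ℝ X) := with_gaugeSeminormFamily
  set q := gaugeSeminormFamily ℝ X with hqdef
  have hequi : UniformEquicontinuous ((↑) ∘ fun lam : K => T lam.1) := by
    apply hq.banach_steinhaus
    intro k x
    have hc : Continuous fun lam : Λ => q k (T lam x) :=
      (hq.continuous_seminorm k).comp (hT x)
    refine BddAbove.mono ?_ ((hK.image hc).bddAbove)
    rintro - ⟨i, rfl⟩
    exact ⟨i.1, i.2, rfl⟩
  have hbound : ∀ i, ∃ P : Seminorm ℝ X, Continuous P ∧
      ∀ lam : K, (q i).comp (T lam.1).toLinearMap ≤ P :=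
    (hq.uniformEquicontinuous_iff_exists_continuous_seminorm
      (fun lam : K => (T lam.1).toLinearMap)).mp hequi
  have key : Continuous fun p : K × X => T p.1.1 p.2 := by
    rw [continuous_iff_continuousAt]
    rintro ⟨lam0, y0⟩
    have : Filter.Tendsto (fun p : K × X => T p.1.1 p.2) (nhds (lam0, y0))
        (nhds (T lam0.1 y0)) := by
      rw [hq.tendsto_nhds]
      intro i ε hε
      obtain ⟨P, hPc, hPb⟩ := hbound i
      have h1 : Filter.Tendsto (fun z : K × X => P (z.2 - y0)) (nhds (lam0, y0)) (nhds 0) := by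
        have hc : Continuous fun z : K × X => P (z.2 - y0) :=
          hPc.comp (continuous_snd.sub continuous_const)
        have := hc.continuousAt (x := (lam0, y0))
        simpa [ContinuousAt] using this
      have h2 : Filter.Tendsto (fun z : K × X => q i (T z.1.1 y0 - T lam0.1 y0))
          (nhds (lam0, y0)) (nhds 0) := by
        have hc : Continuous fun z : K × X => q i (T z.1.1 y0 - T lam0.1 y0) :=
          (hq.continuous_seminorm i).comp
            (((hT y0).comp (continuous_subtype_val.comp continuous_fst)).sub continuous_const)
        have := hc.continuousAt (x := (lam0, y0))
        simpa [ContinuousAt] using this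
      have h3 := (h1.add h2).eventually_lt_const (by simpa using hε)
      filter_upwards [h3] with z hz
      have hb := Seminorm.le_def.mp (hPb z.1) (z.2 - y0)
      rw [Seminorm.comp_apply] at hb
      calc q i (T z.1.1 z.2 - T lam0.1 y0)
          = q i ((T z.1.1 z.2 - T z.1.1 y0) + (T z.1.1 y0 - T lam0.1 y0)) := by
            rw [sub_add_sub_cancel]
        _ ≤ q i (T z.1.1 z.2 - T z.1.1 y0) + q i (T z.1.1 y0 - T lam0.1 y0) :=
            map_add_le_add _ _ _
        _ = q i (T z.1.1 (z.2 - y0)) + q i (T z.1.1 y0 - T lam0.1 y0) := by rw [map_sub (T z.1.1) z.2 y0]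
        _ ≤ P (z.2 - y0) + q i (T z.1.1 y0 - T lam0.1 y0) := add_le_add_left hb _
        _ < ε := hz
    exact this
  induction m with
  | zero => simpa using continuous_snd
  | succ m ih =>
    have heq : (fun p : K × X => (T p.1.1)^[m + 1] p.2)
        = (fun p : K × X => T p.1.1 p.2) ∘ fun p : K × X => (p.1, (T p.1.1)^[m] p.2) := by
      funext p
      simp [Function.iterate_succ_apply']
    rw [heq]
    exact key.comp (continuous_fst.prodMk ih)

theorem stmt5 {Λ : Type*} [MetricSpace Λ] [SigmaCompactSpace Λ]
    {X : Type*} [AddCommGroup X] [Module ℝ X] [UniformSpace X] [IsUniformAddGroup X]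
    [CompleteSpace X] [ContinuousSMul ℝ X] [LocallyConvexSpace ℝ X]
    [TopologicalSpace.MetrizableSpace X] [TopologicalSpace.SeparableSpace X]
    (T : Λ → X →L[ℝ] X) (hT : ∀ x : X, Continuous fun lam => T lam x)
    (h : ∀ V : Set X, IsOpen V → V.Nonempty → ∀ K : Set Λ, IsCompact K →
      ∃ δ > (0 : ℝ), ∀ U : Set X, IsOpen U → U.Nonempty → ∀ M : ℕ,
        ∃ x ∈ U, ∀ lam ∈ K, ∃ n ≥ M, δ < visitProp (T lam) x V n) :
    {x : X | ∀ lam : Λ, IsUFHC (T lam) x} ∈ residual X := by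
  classical
  haveI : (uniformity X).IsCountablyGenerated := by
    rw [uniformity_eq_comap_nhds_zero X]
    infer_instance
  haveI : SecondCountableTopology X := UniformSpace.secondCountable_of_separable X
  obtain ⟨b, hbc, hbne, hb⟩ := TopologicalSpace.exists_countable_basis X
  haveI : Countable b := hbc.to_subtype
  have hbo : ∀ V : b, IsOpen (V : Set X) := fun V => hb.isOpen V.2
  have hbney : ∀ V : b, (V : Set X).Nonempty := fun V =>
    Set.nonempty_iff_ne_empty.mpr (fun h0 => hbne (h0 ▸ V.2))
  have hδ := fun (V : b) (j : ℕ) => h V (hbo V) (hbney V) (compactCovering Λ j)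
    (isCompact_compactCovering Λ j)
  choose δ hδpos hδdense using hδ
  set G : b → ℕ → ℕ → Set X := fun V j M =>
    {x : X | ∀ lam ∈ compactCovering Λ j, ∃ n ≥ M, δ V j < visitProp (T lam) x V n} with hG
  have hGopen : ∀ V j M, IsOpen (G V j M) := by
    intro V j M
    have hKc : IsCompact (compactCovering Λ j) := isCompact_compactCovering Λ j
    set K := compactCovering Λ j with hK
    haveI : CompactSpace K := isCompact_iff_compactSpace.mp hKc
    rw [isOpen_iff_mem_nhds]
    intro x0 hx0
    have hchoice : ∀ lam : K, ∃ n ≥ M, δ V j < visitProp (T lam.1) x0 (V : Set X) n :=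
      fun lam => hx0 lam.1 lam.2
    choose nn hnM hnδ using hchoice
    have hWopen : ∀ n : ℕ, IsOpen {p : K × X | δ V j < visitProp (T p.1.1) p.2 (V : Set X) n} := by
      intro n
      rw [isOpen_iff_mem_nhds]
      rintro ⟨lam1, x1⟩ hp
      set A := (Finset.range (n + 1)).filter
        (fun m => (T lam1.1)^[m] x1 ∈ (V : Set X)) with hA
      have hev : ∀ᶠ p : K × X in nhds (lam1, x1),
          ∀ m ∈ A, (T p.1.1)^[m] p.2 ∈ (V : Set X) := by
        rw [Filter.eventually_all_finset]
        intro m hm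
        have hopen : IsOpen {p : K × X | (T p.1.1)^[m] p.2 ∈ (V : Set X)} :=
          (hbo V).preimage (jointCont T hT hKc m)
        exact hopen.mem_nhds ((Finset.mem_filter.mp hm).2)
      filter_upwards [hev] with p hpA
      have hsub : A ⊆ (Finset.range (n + 1)).filter
          (fun m => (T p.1.1)^[m] p.2 ∈ (V : Set X)) := by
        intro m hm
        exact Finset.mem_filter.mpr ⟨(Finset.mem_filter.mp hm).1, hpA m hm⟩
      calc δ V j < visitProp (T lam1.1) x1 (V : Set X) n := hp
        _ ≤ visitProp (T p.1.1) p.2 (V : Set X) n := by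
            rw [visitProp, visitProp]
            exact (div_le_div_iff_of_pos_right (by positivity)).mpr
              (Nat.cast_le.mpr (Finset.card_le_card hsub))
    have hnhds : ∀ lam0 : K, ∃ u ∈ nhds lam0, ∃ v ∈ nhds x0,
        u ×ˢ v ⊆ {p : K × X | δ V j < visitProp (T p.1.1) p.2 (V : Set X) (nn lam0)} :=
      fun lam0 => mem_nhds_prod_iff.mp (((hWopen (nn lam0)).mem_nhds) (hnδ lam0))
    choose u hu v hv huv using hnhds
    obtain ⟨t, -, ht⟩ := IsCompact.elim_nhds_subcover isCompact_univ u (fun lam0 _ => hu lam0)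
    have hvmem : (⋂ lam0 ∈ t, v lam0) ∈ nhds x0 :=
      (Filter.biInter_finset_mem t).mpr fun lam0 _ => hv lam0
    filter_upwards [hvmem] with x hx
    intro lam hlam
    have hcov : (⟨lam, hlam⟩ : K) ∈ ⋃ lam0 ∈ t, u lam0 := ht (Set.mem_univ _)
    obtain ⟨lam0, hlam0t, hlamu⟩ := Set.mem_iUnion₂.mp hcov
    refine ⟨nn lam0, hnM lam0, ?_⟩
    have hxv : x ∈ v lam0 := Set.mem_iInter₂.mp hx lam0 hlam0t
    have hmemprod : ((⟨lam, hlam⟩ : K), x) ∈ u lam0 ×ˢ v lam0 := Set.mk_mem_prod hlamu hxv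
    have hres := huv lam0 hmemprod
    rw [Set.mem_setOf_eq] at hres
    exact hres
  have hGdense : ∀ V j M, Dense (G V j M) := by
    intro V j M
    rw [dense_iff_inter_open]
    intro U hU hUne
    obtain ⟨x, hxU, hx⟩ := hδdense V j U hU hUne M
    exact ⟨x, hxU, hx⟩
  have hsub : (⋂ i : b × ℕ × ℕ, G i.1 i.2.1 i.2.2) ⊆ {x : X | ∀ lam : Λ, IsUFHC (T lam) x} := by
    intro x hx lam
    intro W hW hWne
    obtain ⟨y, hy⟩ := hWne
    obtain ⟨B, hBb, hyB, hBW⟩ := hb.exists_subset_of_mem_open hy hW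
    obtain ⟨j, hj⟩ := exists_mem_compactCovering lam
    have hfreq : ∃ᶠ n in atTop, δ ⟨B, hBb⟩ j ≤ visitProp (T lam) x W n := by
      rw [Filter.frequently_atTop]
      intro M
      have hxG : x ∈ G ⟨B, hBb⟩ j M := Set.mem_iInter.mp hx (⟨B, hBb⟩, j, M)
      obtain ⟨n, hnM, hn⟩ := hxG lam hj
      exact ⟨n, hnM, le_trans hn.le (visitProp_mono _ _ hBW n)⟩
    have hbdd : Filter.IsBoundedUnder (· ≤ ·) atTop (fun n => visitProp (T lam) x W n) :=
      Filter.isBoundedUnder_of ⟨1, fun n => visitProp_le_one _ _ _ _⟩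
    exact lt_of_lt_of_le (hδpos _ _) (Filter.le_limsup_of_frequently_le hfreq hbdd)
  have hres : (⋂ i : b × ℕ × ℕ, G i.1 i.2.1 i.2.2) ∈ residual X := by
    rw [countable_iInter_mem]
    intro i
    exact residual_of_dense_open (hGopen i.1 i.2.1 i.2.2) (hGdense i.1 i.2.1 i.2.2)
  exact Filter.mem_of_superset hres hsub
end

section
/- Let Λ be a metric space, K ⊆ Λ compact, X a Fréchet space, and (T(λ))_{λ∈Λ} a continuous family of continuous linear operators on X. Fix a non-empty open set V ⊆ X, δ > 0, and M ∈ ℕ. Then the set E := { x ∈ X : for all λ ∈ K there exists n ≥ M with #{0 ≤ m ≤ n : T(λ)^m(x) ∈ V}/(n+1) > δ } is open in X. -/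
open Filter Finset Topology Uniformity
open scoped Classical

/-- An equicontinuous family which is continuous in the parameter is jointly continuous. -/
theorem jointCont_aux {ι X α : Type*} [TopologicalSpace ι] [TopologicalSpace X] [UniformSpace α]
    {F : ι → X → α} (hE : Equicontinuous F) (hC : ∀ x, Continuous fun i => F i x) :
    Continuous fun p : ι × X => F p.1 p.2 := by
  rw [continuous_iff_continuousAt]
  rintro ⟨i0, x0⟩
  rw [ContinuousAt, Uniform.tendsto_nhds_right]
  intro U hU
  rcases comp_mem_uniformity_sets hU with ⟨W, hW, hWU⟩
  have h1 : ∀ᶠ x in 𝓝 x0, ∀ i, (F i x0, F i x) ∈ W := hE x0 W hW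
  have h2 : ∀ᶠ i in 𝓝 i0, (F i0 x0, F i x0) ∈ W :=
    (Uniform.tendsto_nhds_right.mp ((hC x0).tendsto i0)).eventually_mem hW
  rw [nhds_prod_eq, Filter.mem_map]
  filter_upwards [h2.prod_mk h1] with p hp
  exact hWU (SetRel.prodMk_mem_comp hp.1 (hp.2 p.1))

theorem stmt6 {Λ : Type*} [MetricSpace Λ] (K : Set Λ) (hK : IsCompact K)
    {X : Type*} [AddCommGroup X] [Module ℝ X] [UniformSpace X] [IsUniformAddGroup X]
    [CompleteSpace X] [ContinuousSMul ℝ X] [LocallyConvexSpace ℝ X]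
    [TopologicalSpace.MetrizableSpace X]
    (T : Λ → X →L[ℝ] X) (hT : ∀ x : X, Continuous fun lam => T lam x)
    (V : Set X) (hV : IsOpen V) (hVne : V.Nonempty) (δ : ℝ) (hδ : 0 < δ) (M : ℕ) :
    IsOpen {x : X | ∀ lam ∈ K, ∃ n ≥ M, δ < visitProp (T lam) x V n} := by
  -- X is a Fréchet space, hence a Baire space, hence barrelled.
  haveI : (𝓤 X).IsCountablyGenerated := by
    rw [uniformity_eq_comap_nhds_zero X]
    exact Filter.comap.isCountablyGenerated _ _
  have hq : WithSeminorms (gaugeSeminormFamily ℝ X) := with_gaugeSeminormFamily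
  -- The family `T` restricted to `K` is equicontinuous by Banach–Steinhaus.
  have hEq : Equicontinuous (fun i : ↥K => ⇑(T i.1)) := by
    have H : ∀ k x, BddAbove (Set.range fun i : ↥K =>
        gaugeSeminormFamily ℝ X k ((fun i : ↥K => T i.1) i x)) := by
      intro k x
      refine BddAbove.mono ?_ (((hK.image (hT x)).image
        (hq.continuous_seminorm k)).bddAbove)
      rintro r ⟨i, rfl⟩
      exact ⟨T i.1 x, ⟨i.1, i.2, rfl⟩, rfl⟩
    exact (hq.banach_steinhaus H).equicontinuous
  -- Joint continuity of all iterates over `K × X`.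
  have hjoint : ∀ m : ℕ, Continuous fun p : ↥K × X => (⇑(T p.1.1))^[m] p.2 := by
    intro m
    induction m with
    | zero => simpa using continuous_snd
    | succ m ih =>
      have hc : Continuous fun p : ↥K × X => T p.1.1 p.2 :=
        jointCont_aux hEq (fun x => (hT x).comp continuous_subtype_val)
      simp only [Function.iterate_succ_apply']
      exact hc.comp (continuous_fst.prodMk ih)
  rw [isOpen_iff_mem_nhds]
  intro x hx
  choose n hnM hnδ using fun i : ↥K => hx i.1 i.2
  -- the set of good times for parameter `i`
  set F : ↥K → Finset ℕ := fun i =>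
    (Finset.range (n i + 1)).filter (fun m => (⇑(T i.1))^[m] x ∈ V) with hF
  -- an open neighborhood in `↥K × X` on which all these times remain visits
  have hO : ∀ i : ↥K, ∃ u : Set ↥K, ∃ w : Set X, IsOpen u ∧ IsOpen w ∧ i ∈ u ∧ x ∈ w ∧
      ∀ j ∈ u, ∀ y ∈ w, ∀ m ∈ F i, (⇑(T j.1))^[m] y ∈ V := by
    intro i
    have hopen : IsOpen (⋂ m ∈ F i, (fun p : ↥K × X => (⇑(T p.1.1))^[m] p.2) ⁻¹' V) :=
      isOpen_biInter_finset fun m _ => hV.preimage (hjoint m)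
    have hmem : (i, x) ∈ ⋂ m ∈ F i, (fun p : ↥K × X => (⇑(T p.1.1))^[m] p.2) ⁻¹' V := by
      simp only [Set.mem_iInter, Set.mem_preimage]
      intro m hm
      exact (Finset.mem_filter.mp hm).2
    rcases (isOpen_prod_iff.mp hopen) i x hmem with ⟨u, w, hu, hw, hiu, hxw, huw⟩
    refine ⟨u, w, hu, hw, hiu, hxw, fun j hj y hy m hm => ?_⟩
    have := huw (Set.mk_mem_prod hj hy)
    simp only [Set.mem_iInter, Set.mem_preimage] at this
    exact this m hm
  choose u w hu hw hiu hxw hprop using hO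
  -- compactness: finitely many parameters suffice
  haveI : CompactSpace ↥K := isCompact_iff_compactSpace.mp hK
  obtain ⟨t, ht⟩ := isCompact_univ.elim_finite_subcover u hu
    (fun i _ => Set.mem_iUnion.mpr ⟨i, hiu i⟩)
  refine mem_nhds_iff.mpr ⟨⋂ i ∈ t, w i, fun y hy => ?_,
    isOpen_biInter_finset fun i _ => hw i, Set.mem_iInter₂.mpr fun i _ => hxw i⟩
  -- show every point of the finite intersection belongs to the set
  intro lam hlam
  obtain ⟨i, hit, hiu'⟩ : ∃ i ∈ t, (⟨lam, hlam⟩ : ↥K) ∈ u i := by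
    have := ht (Set.mem_univ (⟨lam, hlam⟩ : ↥K))
    simpa using this
  have hyw : y ∈ w i := Set.mem_iInter₂.mp hy i hit
  refine ⟨n i, hnM i, lt_of_lt_of_le (hnδ i) ?_⟩
  unfold visitProp
  have hsub : F i ⊆ (Finset.range (n i + 1)).filter (fun m => (⇑(T lam))^[m] y ∈ V) := by
    intro m hm
    refine Finset.mem_filter.mpr ⟨(Finset.mem_filter.mp hm).1, ?_⟩
    exact hprop i ⟨lam, hlam⟩ hiu' y hyw m hm
  have hcard : (F i).card ≤
      ((Finset.range (n i + 1)).filter (fun m => (⇑(T lam))^[m] y ∈ V)).card :=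
    Finset.card_le_card hsub
  have hpos : (0 : ℝ) < (n i : ℝ) + 1 := by positivity

  gcongr
end
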